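/- Let X be a nonempty finite type, D_0, D_1 distributions on X, and 𝓕 a family of functions X → [0,1]. Set D_X := (1/2)(D_0 + D_1) and let g be the associated posterior function. If h : X → [0,1] is (𝓕, ε)-regular for g under D_X, then for every f ∈ 𝓕: |E_{D_1}[f] − 2·E_{D_X}[f·h]| ≤ 2ε and |E_{D_0}[f] − 2·E_{D_X}[f·(1−h)]| ≤ 2ε. -/

import Mathlib

/-- Expectation of `f` under the (finitely supported) distribution `D`. -/
noncomputable def expect {X : Type*} [Fintype X] (D f : X → ℝ) : ℝ := ∑ x, D x * f x

/-- `D` is a probability distribution on the finite type `X`. -/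
def IsDist {X : Type*} [Fintype X] (D : X → ℝ) : Prop := (∀ x, 0 ≤ D x) ∧ ∑ x, D x = 1

theorem stmt_12 {X : Type*} [Fintype X] [Nonempty X]
    (D0 D1 : X → ℝ) (hD0 : IsDist D0) (hD1 : IsDist D1)
    (𝓕 : Set (X → ℝ)) (h𝓕 : ∀ f ∈ 𝓕, ∀ x, f x ∈ Set.Icc (0:ℝ) 1)
    (DX : X → ℝ) (hDX : DX = fun x => (D0 x + D1 x) / 2)
    (g : X → ℝ)
    (hg : g = fun x => if 0 < D0 x + D1 x then D1 x / (D0 x + D1 x) else 0)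
    (ε : ℝ)
    (h : X → ℝ) (hh : ∀ x, h x ∈ Set.Icc (0:ℝ) 1)
    (hreg : ∀ f ∈ 𝓕, |expect DX (fun x => f x * (g x - h x))| ≤ ε) :
    ∀ f ∈ 𝓕,
      |expect D1 f - 2 * expect DX (fun x => f x * h x)| ≤ 2 * ε ∧
      |expect D0 f - 2 * expect DX (fun x => f x * (1 - h x))| ≤ 2 * ε := by
  intro f hf
  have key1 : ∀ x, D1 x * f x = 2 * (DX x * (f x * g x)) := by
    intro x
    subst hDX hg
    by_cases hx : 0 < D0 x + D1 x
    · simp only [hx, if_pos]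
      field_simp
    · have h1 : D1 x = 0 := le_antisymm (by nlinarith [hD0.1 x, hD1.1 x]) (hD1.1 x)
      simp [hx, h1]
  have key0 : ∀ x, D0 x * f x = 2 * (DX x * (f x * (1 - g x))) := by
    intro x
    subst hDX hg
    by_cases hx : 0 < D0 x + D1 x
    · simp only [hx, if_pos]
      field_simp
      ring
    · have h1 : D1 x = 0 := le_antisymm (by nlinarith [hD0.1 x, hD1.1 x]) (hD1.1 x)
      have h0 : D0 x = 0 := le_antisymm (by nlinarith [hD0.1 x, hD1.1 x]) (hD0.1 x)
      simp [hx, h1, h0]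
  have hr := hreg f hf
  constructor
  · have : expect D1 f - 2 * expect DX (fun x => f x * h x)
        = 2 * expect DX (fun x => f x * (g x - h x)) := by
      simp only [expect, Finset.mul_sum, ← Finset.sum_sub_distrib]
      refine Finset.sum_congr rfl fun x _ => ?_
      rw [key1 x]; ring
    rw [this, abs_mul, abs_two]
    linarith [abs_nonneg (expect DX (fun x => f x * (g x - h x)))]
  · have : expect D0 f - 2 * expect DX (fun x => f x * (1 - h x))
        = -(2 * expect DX (fun x => f x * (g x - h x))) := by
      simp only [expect, Finset.mul_sum, ← Finset.sum_sub_distrib, ← Finset.sum_neg_distrib]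
      refine Finset.sum_congr rfl fun x _ => ?_
      rw [key0 x]; ring
    rw [this, abs_neg, abs_mul, abs_two]
    linarith [abs_nonneg (expect DX (fun x => f x * (g x - h x)))]
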